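/- Let H be a complex Hilbert space, P and Q orthogonal projections on H with ranges M and N such that M + N is closed, and Π := P_{M∩N}. Let W, W′ ∈ H satisfy P(W) = 0, Q(W′) = 0, and (1 + Π − PQ)⁻¹(W + P(W′)) = (1 + Π − QP)⁻¹(W′ + Q(W)). Then A := −(1 + Π − PQ)⁻¹(W + P(W′)) satisfies A − P(A) = −W, A − Q(A) = −W′, and Π(A) = 0. -/
import Mathlib


/-- Existence of the connection form: with `M + N` closed, `P W = 0`, `Q W' = 0` and the
`†`-concordance condition `(1 + Π - PQ)⁻¹(W + P W') = (1 + Π - QP)⁻¹(W' + Q W)`, the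
vector `A := -(1 + Π - PQ)⁻¹(W + P W')` satisfies `A - P A = -W`, `A - Q A = -W'` and
`Π A = 0`. -/
theorem stmt_16 {H : Type*} [NormedAddCommGroup H] [InnerProductSpace ℂ H] [CompleteSpace H]
    (M N : Submodule ℂ H) (P Q R : H →L[ℂ] H)
    (hP : ∀ x : H, P x ∈ M ∧ x - P x ∈ Mᗮ)
    (hQ : ∀ x : H, Q x ∈ N ∧ x - Q x ∈ Nᗮ)
    (hR : ∀ x : H, R x ∈ M ⊓ N ∧ x - R x ∈ (M ⊓ N)ᗮ)
    (hMN : IsClosed ((M ⊔ N : Submodule ℂ H) : Set H))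
    (T T' : H →L[ℂ] H)
    (hT : T * (1 + R - P * Q) = 1 ∧ (1 + R - P * Q) * T = 1)
    (hT' : T' * (1 + R - Q * P) = 1 ∧ (1 + R - Q * P) * T' = 1)
    (W W' : H) (hW : P W = 0) (hW' : Q W' = 0)
    (hconc : T (W + P W') = T' (W' + Q W)) :
    -(T (W + P W')) - P (-(T (W + P W'))) = -W ∧
    -(T (W + P W')) - Q (-(T (W + P W'))) = -W' ∧
    R (-(T (W + P W'))) = 0 := by
  set A := T (W + P W') with hA
  have Pfix : ∀ y, y ∈ M → P y = y := by
    intro y hy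
    have h2 := (hP y).2
    have h1 : y - P y ∈ M := Submodule.sub_mem _ hy (hP y).1
    have h0 : y - P y = 0 := Submodule.disjoint_def.mp (Submodule.orthogonal_disjoint M) _ h1 h2
    have := sub_eq_zero.mp h0
    exact this.symm
  have Qfix : ∀ y, y ∈ N → Q y = y := by
    intro y hy
    have h2 := (hQ y).2
    have h1 : y - Q y ∈ N := Submodule.sub_mem _ hy (hQ y).1
    have h0 : y - Q y = 0 := Submodule.disjoint_def.mp (Submodule.orthogonal_disjoint N) _ h1 h2
    exact (sub_eq_zero.mp h0).symm
  have Rfix : ∀ y, y ∈ M ⊓ N → R y = y := by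
    intro y hy
    have h2 := (hR y).2
    have h1 : y - R y ∈ M ⊓ N := Submodule.sub_mem _ hy (hR y).1
    have h0 : y - R y = 0 :=
      Submodule.disjoint_def.mp (Submodule.orthogonal_disjoint (M ⊓ N)) _ h1 h2
    exact (sub_eq_zero.mp h0).symm
  have Rzero : ∀ z, z ∈ (M ⊓ N)ᗮ → R z = 0 := by
    intro z hz
    have h1 := (hR z).1
    have h2 : R z ∈ (M ⊓ N)ᗮ := by
      have := Submodule.sub_mem _ hz (hR z).2
      simpa using this
    exact Submodule.disjoint_def.mp (Submodule.orthogonal_disjoint (M ⊓ N)) _ h1 h2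
  have Mle : Mᗮ ≤ (M ⊓ N)ᗮ := Submodule.orthogonal_le inf_le_left
  have Nle : Nᗮ ≤ (M ⊓ N)ᗮ := Submodule.orthogonal_le inf_le_right
  have WM : W ∈ Mᗮ := by have := (hP W).2; rwa [hW, sub_zero] at this
  have W'N : W' ∈ Nᗮ := by have := (hQ W').2; rwa [hW', sub_zero] at this
  have hRP : ∀ x, R (P x) = R x := by
    intro x
    have h0 : R (x - P x) = 0 := Rzero _ (Mle (hP x).2)
    rw [map_sub] at h0
    exact (sub_eq_zero.mp h0).symm
  have hRQ : ∀ x, R (Q x) = R x := by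
    intro x
    have h0 : R (x - Q x) = 0 := Rzero _ (Nle (hQ x).2)
    rw [map_sub] at h0
    exact (sub_eq_zero.mp h0).symm
  have hPP : ∀ x, P (P x) = P x := fun x => Pfix _ (hP x).1
  have hQQ : ∀ x, Q (Q x) = Q x := fun x => Qfix _ (hQ x).1
  have hRR : ∀ x, R (R x) = R x := fun x => Rfix _ (hR x).1
  -- key equation from the left inverse
  have hE : A + R A - P (Q A) = W + P W' := by
    have h := congrArg (fun f : H →L[ℂ] H => f (W + P W')) hT.2
    simp only [ContinuousLinearMap.mul_apply, ContinuousLinearMap.add_apply,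
      ContinuousLinearMap.sub_apply, ContinuousLinearMap.one_apply] at h
    exact h
  -- R A = 0
  have hRA : R A = 0 := by
    have h := congrArg R hE
    rw [map_sub, map_add, map_add, hRR, hRP, hRQ, hRP] at h
    have hRW : R W = 0 := Rzero _ (Mle WM)
    have hRW' : R W' = 0 := Rzero _ (Nle W'N)
    rw [hRW, hRW'] at h
    -- h : R A + R A - R A = 0 + 0
    simpa using h
  have hE' : A - P (Q A) = W + P W' := by
    rw [hRA, add_zero] at hE; exact hE
  have hPA : P A - P (Q A) = P W' := by
    have h := congrArg P hE'
    rw [map_sub, map_add, hPP, hPP, hW, zero_add] at h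
    exact h
  have goal1 : A - P A = W := by
    have h : (A - P (Q A)) - (P A - P (Q A)) = (W + P W') - P W' := by rw [hE', hPA]
    have h2 : (A - P (Q A)) - (P A - P (Q A)) = A - P A := by abel
    have h3 : (W + P W') - P W' = W := by abel
    rw [h2, h3] at h
    exact h
  -- second equation
  have hE2 : A + R A - Q (P A) = W' + Q W := by
    have h := congrArg (fun f : H →L[ℂ] H => f (W' + Q W)) hT'.2
    simp only [ContinuousLinearMap.mul_apply, ContinuousLinearMap.one_apply] at h
    rw [← hconc] at h
    simp only [ContinuousLinearMap.add_apply, ContinuousLinearMap.sub_apply,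
      ContinuousLinearMap.one_apply] at h
    exact h
  have hE2' : A - Q (P A) = W' + Q W := by
    rw [hRA, add_zero] at hE2; exact hE2
  have hQA : Q A - Q (P A) = Q W := by
    have h := congrArg Q hE2'
    rw [map_sub, map_add, hQQ, hQQ, hW', zero_add] at h
    exact h
  have goal2 : A - Q A = W' := by
    have h : (A - Q (P A)) - (Q A - Q (P A)) = (W' + Q W) - Q W := by rw [hE2', hQA]
    have h2 : (A - Q (P A)) - (Q A - Q (P A)) = A - Q A := by abel
    have h3 : (W' + Q W) - Q W = W' := by abel
    rw [h2, h3] at h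
    exact h
  refine ⟨?_, ?_, ?_⟩
  · rw [map_neg, sub_neg_eq_add, ← goal1]; abel
  · rw [map_neg, sub_neg_eq_add, ← goal2]; abel
  · rw [map_neg, hRA, neg_zero]
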